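/- Let η(x) = (4/π)·exp(−|x|²) for x ∈ ℝ² and η_σ(x) = σ^{−2}·η(x/σ) for σ > 0. Then for every polynomial p : ℝ² → ℝ of total degree at most 3, every x ∈ ℝ², and every σ > 0, σ^{−2}·∫_{ℝ²} η_σ(x − y)·(p(y) − p(x)) dy = Δp(x), where Δp = ∂²p/∂x₁² + ∂²p/∂x₂²; i.e., the integral approximation of the Laplacian used in the weighted particle method is exact on polynomials of degree up to 3. -/

import Mathlib

open MeasureTheory MvPolynomial
open Real

/-- The Gaussian kernel `η(x) = (4/π) exp(-|x|²)` on `ℝ²`. -/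
noncomputable def gaussEta (z : ℝ × ℝ) : ℝ :=
  (4 / Real.pi) * Real.exp (-(z.1 ^ 2 + z.2 ^ 2))

/-- The scaled kernel `η_σ(x) = σ⁻² η(x/σ)`. -/
noncomputable def gaussEtaScaled (σ : ℝ) (z : ℝ × ℝ) : ℝ :=
  (σ ^ 2)⁻¹ * gaussEta (z.1 / σ, z.2 / σ)

lemma integrable_pow_gauss {b : ℝ} (hb : 0 < b) (k : ℕ) :
    Integrable fun u : ℝ => u ^ k * Real.exp (-b * u ^ 2) := by
  have hk : (-1 : ℝ) < (k : ℝ) := lt_of_lt_of_le (by norm_num) (Nat.cast_nonneg k)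
  simpa [Real.rpow_natCast] using integrable_rpow_mul_exp_neg_mul_sq hb hk

lemma integral_odd_gauss {b : ℝ} {k : ℕ} (hk : Odd k) :
    ∫ u : ℝ, u ^ k * Real.exp (-b * u ^ 2) = 0 := by
  have h := integral_neg_eq_self (fun u : ℝ => u ^ k * Real.exp (-b * u ^ 2)) volume
  simp only [hk.neg_pow, neg_sq, neg_mul] at h ⊢
  rw [integral_neg] at h
  linarith

lemma integral_sq_gauss {b : ℝ} (hb : 0 < b) :
    ∫ u : ℝ, u ^ 2 * Real.exp (-b * u ^ 2) = Real.sqrt (π / b) / (2 * b) := by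
  set g : ℝ → ℝ := fun u => u * Real.exp (-b * u ^ 2) with hg
  set g' : ℝ → ℝ := fun u => Real.exp (-b * u ^ 2) - 2 * b * (u ^ 2 * Real.exp (-b * u ^ 2)) with hg'
  have hderiv : ∀ u : ℝ, HasDerivAt g (g' u) u := by
    intro u
    have h1 : HasDerivAt (fun u : ℝ => -b * u ^ 2) (-b * (2 * u)) u := by
      simpa using ((hasDerivAt_pow 2 u).const_mul (-b))
    have h3 : HasDerivAt g
        (1 * Real.exp (-b * u ^ 2) + id u * (Real.exp (-b * u ^ 2) * (-b * (2 * u)))) u :=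
      (hasDerivAt_id u).mul h1.exp
    convert h3 using 1
    simp [hg']; ring
  have hint : Integrable g' :=
    (integrable_exp_neg_mul_sq hb).sub (((integrable_pow_gauss hb 2)).const_mul (2*b))
  have htop : Filter.Tendsto g Filter.atTop (nhds 0) := by
    have h := (rpow_mul_exp_neg_mul_sq_isLittleO_exp_neg hb 1).isBigO
    have h2 : Filter.Tendsto (fun x : ℝ => Real.exp (-(1/2) * x)) Filter.atTop (nhds 0) := by
      have h0 : Filter.Tendsto (fun x : ℝ => (1/2) * x) Filter.atTop Filter.atTop :=
        Filter.Tendsto.const_mul_atTop (by norm_num : (0:ℝ) < 1/2) Filter.tendsto_id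
      exact (tendsto_exp_neg_atTop_nhds_zero.comp h0).congr fun x => by
        simp [Function.comp, neg_mul]
    have h3 := h.trans_tendsto h2
    apply h3.congr'
    filter_upwards [Filter.eventually_ge_atTop (0:ℝ)] with u hu
    rw [Real.rpow_one]
  have hbot : Filter.Tendsto g Filter.atBot (nhds 0) := by
    have := (htop.comp Filter.tendsto_neg_atBot_atTop).neg
    simp only [Function.comp, hg, neg_neg, neg_sq, neg_mul, neg_zero] at this ⊢
    exact this
  have hIic : ∫ u in Set.Iic (0:ℝ), g' u = 0 := by
    have := integral_Iic_of_hasDerivAt_of_tendsto' (a := 0) (f := g) (f' := g')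
      (fun x _ => hderiv x) hint.integrableOn hbot
    simpa [hg] using this
  have hIoi : ∫ u in Set.Ioi (0:ℝ), g' u = 0 := by
    have := integral_Ioi_of_hasDerivAt_of_tendsto' (a := 0) (f := g) (f' := g')
      (fun x _ => hderiv x) hint.integrableOn htop
    simpa [hg] using this
  have htot : ∫ u, g' u = 0 := by
    rw [← intervalIntegral.integral_Iic_add_Ioi hint.integrableOn hint.integrableOn, hIic, hIoi, add_zero]
  have hsplit : ∫ u, g' u = (∫ u : ℝ, Real.exp (-b * u ^ 2))
      - 2 * b * ∫ u : ℝ, u ^ 2 * Real.exp (-b * u ^ 2) := by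
    rw [hg', integral_sub (integrable_exp_neg_mul_sq hb)
      ((integrable_pow_gauss hb 2).const_mul (2*b)), integral_const_mul]
  rw [htot, integral_gaussian] at hsplit
  have hb' : (2:ℝ) * b ≠ 0 := by positivity
  field_simp at hsplit ⊢
  linarith

lemma integrable_gauss_shift_pow {b : ℝ} (hb : 0 < b) (k : ℕ) (c : ℝ) :
    Integrable fun t : ℝ => Real.exp (-b * (c - t) ^ 2) * t ^ k := by
  have h : Integrable fun u : ℝ => Real.exp (-b * u ^ 2) * (u + c) ^ k := by
    have he : (fun u : ℝ => Real.exp (-b * u ^ 2) * (u + c) ^ k)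
        = fun u => ∑ j ∈ Finset.range (k + 1),
            (c ^ (k - j) * (k.choose j : ℝ)) * (u ^ j * Real.exp (-b * u ^ 2)) := by
      funext u
      rw [add_pow, Finset.mul_sum]
      exact Finset.sum_congr rfl fun j hj => by ring
    rw [he]
    exact integrable_finset_sum _ fun j _ => (integrable_pow_gauss hb j).const_mul _
  have h2 := h.comp_sub_right c
  refine h2.congr (Filter.Eventually.of_forall fun t => ?_)
  have h3 : (t - c) ^ 2 = (c - t) ^ 2 := by ring
  simp only [h3]
  rw [show t - c + c = t from by ring]

lemma integral_gauss_shift_pow {b : ℝ} (hb : 0 < b) (k : ℕ) (c : ℝ) :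
    ∫ t : ℝ, Real.exp (-b * (c - t) ^ 2) * t ^ k
      = ∑ j ∈ Finset.range (k + 1), c ^ (k - j) * (k.choose j : ℝ)
          * ∫ u : ℝ, u ^ j * Real.exp (-b * u ^ 2) := by
  have h := integral_add_right_eq_self (μ := volume)
      (fun t : ℝ => Real.exp (-b * (c - t) ^ 2) * t ^ k) c
  rw [← h]
  have he : ∀ u : ℝ, Real.exp (-b * (c - (u + c)) ^ 2) * (u + c) ^ k
      = ∑ j ∈ Finset.range (k + 1),
          (c ^ (k - j) * (k.choose j : ℝ)) * (u ^ j * Real.exp (-b * u ^ 2)) := by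
    intro u
    have h3 : (c - (u + c)) ^ 2 = u ^ 2 := by ring
    rw [h3, add_pow, Finset.mul_sum]
    exact Finset.sum_congr rfl fun j hj => by ring
  simp_rw [he]
  rw [integral_finset_sum _ fun j _ => (integrable_pow_gauss hb j).const_mul _]
  simp_rw [integral_const_mul]

lemma moment0 {b : ℝ} : ∫ u : ℝ, u ^ 0 * Real.exp (-b * u ^ 2) = Real.sqrt (π / b) := by
  simpa using integral_gaussian b

lemma moment1 {b : ℝ} : ∫ u : ℝ, u ^ 1 * Real.exp (-b * u ^ 2) = 0 :=
  integral_odd_gauss odd_one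

lemma moment3 {b : ℝ} : ∫ u : ℝ, u ^ 3 * Real.exp (-b * u ^ 2) = 0 :=
  integral_odd_gauss ⟨1, by norm_num⟩

lemma gauss_I0 {b : ℝ} (hb : 0 < b) (c : ℝ) :
    ∫ t : ℝ, Real.exp (-b * (c - t) ^ 2) * t ^ 0 = Real.sqrt (π / b) := by
  rw [integral_gauss_shift_pow hb]
  simp only [zero_add, Finset.sum_range_one, moment0]
  norm_num

lemma gauss_I1 {b : ℝ} (hb : 0 < b) (c : ℝ) :
    ∫ t : ℝ, Real.exp (-b * (c - t) ^ 2) * t ^ 1 = Real.sqrt (π / b) * c := by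
  rw [integral_gauss_shift_pow hb]
  simp only [Finset.sum_range_succ, Finset.sum_range_zero, moment0, moment1, moment3,
    integral_sq_gauss hb]
  norm_num
  ring

lemma gauss_I2 {b : ℝ} (hb : 0 < b) (c : ℝ) :
    ∫ t : ℝ, Real.exp (-b * (c - t) ^ 2) * t ^ 2 = Real.sqrt (π / b) * c ^ 2 + Real.sqrt (π / b) / (2 * b) := by
  rw [integral_gauss_shift_pow hb]
  simp only [Finset.sum_range_succ, Finset.sum_range_zero, moment0, moment1, moment3,
    integral_sq_gauss hb]
  norm_num
  ring

lemma gauss_I3 {b : ℝ} (hb : 0 < b) (c : ℝ) :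
    ∫ t : ℝ, Real.exp (-b * (c - t) ^ 2) * t ^ 3 = Real.sqrt (π / b) * c ^ 3 + 3 * c * (Real.sqrt (π / b) / (2 * b)) := by
  rw [integral_gauss_shift_pow hb]
  simp only [Finset.sum_range_succ, Finset.sum_range_zero, moment0, moment1, moment3,
    integral_sq_gauss hb]
  norm_num
  ring

lemma gaussEtaScaled_eq {σ : ℝ} (hσ : 0 < σ) (z : ℝ × ℝ) :
    gaussEtaScaled σ z = (σ ^ 2)⁻¹ * (4 / Real.pi) *
      (Real.exp (-(σ ^ 2)⁻¹ * z.1 ^ 2) * Real.exp (-(σ ^ 2)⁻¹ * z.2 ^ 2)) := by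
  unfold gaussEtaScaled gaussEta
  rw [← Real.exp_add]
  have h1 : (z.1 / σ) ^ 2 = (σ ^ 2)⁻¹ * z.1 ^ 2 := by
    rw [div_pow]; field_simp
  have h2 : (z.2 / σ) ^ 2 = (σ ^ 2)⁻¹ * z.2 ^ 2 := by
    rw [div_pow]; field_simp
  simp only [h1, h2]
  ring_nf

lemma integrable_gauss2d_pow {σ : ℝ} (hσ : 0 < σ) (a b : ℕ) (x : ℝ × ℝ) (C : ℝ) :
    Integrable fun y : ℝ × ℝ =>
      gaussEtaScaled σ (x - y) * (y.1 ^ a * y.2 ^ b - C) := by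
  have hb0 : (0:ℝ) < (σ ^ 2)⁻¹ := by positivity
  have h1 : Integrable fun y : ℝ × ℝ =>
      (Real.exp (-(σ ^ 2)⁻¹ * (x.1 - y.1) ^ 2) * y.1 ^ a) *
      (Real.exp (-(σ ^ 2)⁻¹ * (x.2 - y.2) ^ 2) * y.2 ^ b) := by
    rw [MeasureTheory.Measure.volume_eq_prod]
    exact (integrable_gauss_shift_pow hb0 a x.1).mul_prod (integrable_gauss_shift_pow hb0 b x.2)
  have h2 : Integrable fun y : ℝ × ℝ =>
      (Real.exp (-(σ ^ 2)⁻¹ * (x.1 - y.1) ^ 2) * y.1 ^ 0) *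
      (Real.exp (-(σ ^ 2)⁻¹ * (x.2 - y.2) ^ 2) * y.2 ^ 0) := by
    rw [MeasureTheory.Measure.volume_eq_prod]
    exact (integrable_gauss_shift_pow hb0 0 x.1).mul_prod (integrable_gauss_shift_pow hb0 0 x.2)
  have hrw : (fun y : ℝ × ℝ => gaussEtaScaled σ (x - y) * (y.1 ^ a * y.2 ^ b - C)) =
      fun y : ℝ × ℝ => ((σ ^ 2)⁻¹ * (4 / Real.pi)) *
        ((Real.exp (-(σ ^ 2)⁻¹ * (x.1 - y.1) ^ 2) * y.1 ^ a) *
         (Real.exp (-(σ ^ 2)⁻¹ * (x.2 - y.2) ^ 2) * y.2 ^ b)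
         - C * ((Real.exp (-(σ ^ 2)⁻¹ * (x.1 - y.1) ^ 2) * y.1 ^ 0) *
                (Real.exp (-(σ ^ 2)⁻¹ * (x.2 - y.2) ^ 2) * y.2 ^ 0))) := by
    funext y
    rw [gaussEtaScaled_eq hσ]
    simp only [Prod.fst_sub, Prod.snd_sub, pow_zero]
    ring
  rw [hrw]
  exact (h1.sub (h2.const_mul C)).const_mul _

lemma integral_gauss2d_pow {σ : ℝ} (hσ : 0 < σ) (a b : ℕ) (x : ℝ × ℝ) (C : ℝ) :
    ∫ y : ℝ × ℝ, gaussEtaScaled σ (x - y) * (y.1 ^ a * y.2 ^ b - C) =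
      (σ ^ 2)⁻¹ * (4 / Real.pi) *
        ((∫ t : ℝ, Real.exp (-(σ ^ 2)⁻¹ * (x.1 - t) ^ 2) * t ^ a) *
         (∫ t : ℝ, Real.exp (-(σ ^ 2)⁻¹ * (x.2 - t) ^ 2) * t ^ b)
          - C * (Real.sqrt (π / (σ ^ 2)⁻¹) * Real.sqrt (π / (σ ^ 2)⁻¹))) := by
  have hb0 : (0:ℝ) < (σ ^ 2)⁻¹ := by positivity
  have hrw : (fun y : ℝ × ℝ => gaussEtaScaled σ (x - y) * (y.1 ^ a * y.2 ^ b - C)) =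
      fun y : ℝ × ℝ => ((σ ^ 2)⁻¹ * (4 / Real.pi)) *
        ((Real.exp (-(σ ^ 2)⁻¹ * (x.1 - y.1) ^ 2) * y.1 ^ a) *
         (Real.exp (-(σ ^ 2)⁻¹ * (x.2 - y.2) ^ 2) * y.2 ^ b)
         - C * ((Real.exp (-(σ ^ 2)⁻¹ * (x.1 - y.1) ^ 2) * y.1 ^ 0) *
                (Real.exp (-(σ ^ 2)⁻¹ * (x.2 - y.2) ^ 2) * y.2 ^ 0))) := by
    funext y
    rw [gaussEtaScaled_eq hσ]
    simp only [Prod.fst_sub, Prod.snd_sub, pow_zero]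
    ring
  rw [hrw, integral_const_mul]
  have hf1 : Integrable fun y : ℝ × ℝ =>
      (Real.exp (-(σ ^ 2)⁻¹ * (x.1 - y.1) ^ 2) * y.1 ^ a) *
      (Real.exp (-(σ ^ 2)⁻¹ * (x.2 - y.2) ^ 2) * y.2 ^ b) := by
    rw [MeasureTheory.Measure.volume_eq_prod]
    exact (integrable_gauss_shift_pow hb0 a x.1).mul_prod (integrable_gauss_shift_pow hb0 b x.2)
  have hf2 : Integrable fun y : ℝ × ℝ =>
      (Real.exp (-(σ ^ 2)⁻¹ * (x.1 - y.1) ^ 2) * y.1 ^ 0) *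
      (Real.exp (-(σ ^ 2)⁻¹ * (x.2 - y.2) ^ 2) * y.2 ^ 0) := by
    rw [MeasureTheory.Measure.volume_eq_prod]
    exact (integrable_gauss_shift_pow hb0 0 x.1).mul_prod (integrable_gauss_shift_pow hb0 0 x.2)
  rw [integral_sub hf1 (hf2.const_mul C), integral_const_mul]
  rw [MeasureTheory.Measure.volume_eq_prod]
  have e1 : (∫ z : ℝ × ℝ, Real.exp (-(σ ^ 2)⁻¹ * (x.1 - z.1) ^ 2) * z.1 ^ a *
        (Real.exp (-(σ ^ 2)⁻¹ * (x.2 - z.2) ^ 2) * z.2 ^ b)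
        ∂((volume : Measure ℝ).prod (volume : Measure ℝ))) =
      (∫ t : ℝ, Real.exp (-(σ ^ 2)⁻¹ * (x.1 - t) ^ 2) * t ^ a) *
      (∫ t : ℝ, Real.exp (-(σ ^ 2)⁻¹ * (x.2 - t) ^ 2) * t ^ b) :=
    MeasureTheory.integral_prod_mul (fun t : ℝ => Real.exp (-(σ ^ 2)⁻¹ * (x.1 - t) ^ 2) * t ^ a)
      (fun t : ℝ => Real.exp (-(σ ^ 2)⁻¹ * (x.2 - t) ^ 2) * t ^ b)
  have e2 : (∫ z : ℝ × ℝ, Real.exp (-(σ ^ 2)⁻¹ * (x.1 - z.1) ^ 2) * z.1 ^ 0 *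
        (Real.exp (-(σ ^ 2)⁻¹ * (x.2 - z.2) ^ 2) * z.2 ^ 0)
        ∂((volume : Measure ℝ).prod (volume : Measure ℝ))) =
      (∫ t : ℝ, Real.exp (-(σ ^ 2)⁻¹ * (x.1 - t) ^ 2) * t ^ 0) *
      (∫ t : ℝ, Real.exp (-(σ ^ 2)⁻¹ * (x.2 - t) ^ 2) * t ^ 0) :=
    MeasureTheory.integral_prod_mul (fun t : ℝ => Real.exp (-(σ ^ 2)⁻¹ * (x.1 - t) ^ 2) * t ^ 0)
      (fun t : ℝ => Real.exp (-(σ ^ 2)⁻¹ * (x.2 - t) ^ 2) * t ^ 0)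
  rw [e1, e2, gauss_I0 hb0 x.1, gauss_I0 hb0 x.2]

lemma mono_case {σ : ℝ} (hσ : 0 < σ) (m : Fin 2 →₀ ℕ) (hm : m 0 + m 1 ≤ 3) (c : ℝ)
    (x : ℝ × ℝ) :
    (σ ^ 2)⁻¹ * ∫ y : ℝ × ℝ, gaussEtaScaled σ (x - y) *
        (eval ![y.1, y.2] (monomial m c) - eval ![x.1, x.2] (monomial m c)) =
      eval ![x.1, x.2] (pderiv 0 (pderiv 0 (monomial m c))
        + pderiv 1 (pderiv 1 (monomial m c))) := by
  have hb0 : (0:ℝ) < (σ ^ 2)⁻¹ := by positivity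
  simp only [pderiv_monomial, map_add, eval_monomial, Finsupp.prod_pow, Fin.prod_univ_two,
    Matrix.cons_val_zero, Matrix.cons_val_one, Matrix.head_cons, Finsupp.tsub_apply,
    Finsupp.single_eq_same, Finsupp.single_apply, Nat.sub_zero,
    show ((0 : Fin 2) = 1) = False from by simp, show ((1 : Fin 2) = 0) = False from by simp,
    if_false, if_true]
  have hint : ∫ (y : ℝ × ℝ), gaussEtaScaled σ (x - y) *
        (c * (y.1 ^ m 0 * y.2 ^ m 1) - c * (x.1 ^ m 0 * x.2 ^ m 1))
      = c * ∫ y : ℝ × ℝ, gaussEtaScaled σ (x - y) *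
        (y.1 ^ m 0 * y.2 ^ m 1 - x.1 ^ m 0 * x.2 ^ m 1) := by
    rw [← integral_const_mul]
    congr 1; funext y; ring
  rw [hint, integral_gauss2d_pow hσ]
  have hπ : (0:ℝ) < π := Real.pi_pos
  have hs : Real.sqrt (π / (σ ^ 2)⁻¹) = Real.sqrt π * σ := by
    rw [show π / (σ ^ 2)⁻¹ = π * σ ^ 2 by field_simp, Real.sqrt_mul hπ.le,
      Real.sqrt_sq hσ.le]
  have hππ : Real.sqrt π * Real.sqrt π = π := Real.mul_self_sqrt hπ.le
  obtain ⟨a, ha⟩ : ∃ a, m 0 = a := ⟨_, rfl⟩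
  obtain ⟨b, hb⟩ : ∃ b, m 1 = b := ⟨_, rfl⟩
  rw [ha, hb] at hm ⊢
  have ha3 : a ≤ 3 := by omega
  have hb3 : b ≤ 3 := by omega
  have hσ' : σ ≠ 0 := ne_of_gt hσ
  have hπ' : Real.pi ≠ 0 := ne_of_gt hπ
  interval_cases a <;> interval_cases b <;>
    first
      | (exfalso; omega)
      | (simp only [gauss_I0 hb0, gauss_I1 hb0, gauss_I2 hb0, gauss_I3 hb0, hs]
         push_cast
         field_simp
         try ring_nf
         try simp only [Real.sq_sqrt hπ.le]
         try ring
         try nlinarith [hππ])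

lemma integrable_mono {σ : ℝ} (hσ : 0 < σ) (m : Fin 2 →₀ ℕ) (c : ℝ) (x : ℝ × ℝ) :
    Integrable fun y : ℝ × ℝ => gaussEtaScaled σ (x - y) *
      (eval ![y.1, y.2] (monomial m c) - eval ![x.1, x.2] (monomial m c)) := by
  simp only [eval_monomial, Finsupp.prod_pow, Fin.prod_univ_two, Matrix.cons_val_zero,
    Matrix.cons_val_one, Matrix.head_cons]
  have h := (integrable_gauss2d_pow hσ (m 0) (m 1) x (x.1 ^ m 0 * x.2 ^ m 1)).const_mul c
  refine h.congr (Filter.Eventually.of_forall fun y => ?_)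
  ring

theorem integral_laplacian_exact_on_cubics
    (p : MvPolynomial (Fin 2) ℝ) (hp : p.totalDegree ≤ 3)
    (x : ℝ × ℝ) (σ : ℝ) (hσ : 0 < σ) :
    (σ ^ 2)⁻¹ *
        ∫ y : ℝ × ℝ, gaussEtaScaled σ (x - y) *
          (eval ![y.1, y.2] p - eval ![x.1, x.2] p) =
      eval ![x.1, x.2] (pderiv 0 (pderiv 0 p) + pderiv 1 (pderiv 1 p)) := by
  have hdeg : ∀ m ∈ p.support, m 0 + m 1 ≤ 3 := by
    intro m hmem
    have h1 := MvPolynomial.le_totalDegree hmem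
    have h2 : (m.sum fun _ e => e) = m 0 + m 1 := by
      rw [Finsupp.sum_fintype _ _ fun i => rfl, Fin.sum_univ_two]
    omega
  conv_lhs => rw [p.as_sum]
  conv_rhs => rw [p.as_sum]
  have hLHS : (fun y : ℝ × ℝ => gaussEtaScaled σ (x - y) *
      (eval ![y.1, y.2] (∑ m ∈ p.support, monomial m (coeff m p))
        - eval ![x.1, x.2] (∑ m ∈ p.support, monomial m (coeff m p)))) =
      fun y : ℝ × ℝ => ∑ m ∈ p.support, gaussEtaScaled σ (x - y) *
        (eval ![y.1, y.2] (monomial m (coeff m p))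
          - eval ![x.1, x.2] (monomial m (coeff m p))) := by
    funext y
    rw [map_sum, map_sum, ← Finset.sum_sub_distrib, Finset.mul_sum]
  rw [hLHS, integral_finset_sum _ fun m _ => integrable_mono hσ m (coeff m p) x,
    Finset.mul_sum]
  rw [show (pderiv 0 (pderiv 0 (∑ m ∈ p.support, monomial m (coeff m p)))
        + pderiv 1 (pderiv 1 (∑ m ∈ p.support, monomial m (coeff m p))))
      = ∑ m ∈ p.support, (pderiv 0 (pderiv 0 (monomial m (coeff m p)))
        + pderiv 1 (pderiv 1 (monomial m (coeff m p)))) from by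
    simp only [map_sum, Finset.sum_add_distrib]]
  rw [map_sum]
  exact Finset.sum_congr rfl fun m hmem => mono_case hσ m (hdeg m hmem) (coeff m p) x
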